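/- Let b ≥ 2 be an integer, j₁ ∈ ℕ₀ = {0,1,2,…}, m₁ ∈ {0,…,b^{j₁}−1}, ℓ₁ ∈ {1,…,b−1}, and let z = (z₁,z₂) ∈ [0,1)² with z₁ in the open interval (b^{−j₁}m₁, b^{−j₁}(m₁+1)). Let k₁ ∈ {0,…,b−1} be such that z₁ ∈ [b^{−j₁−1}(bm₁+k₁), b^{−j₁−1}(bm₁+k₁+1)). Then ∫_{[0,1)²} 1[x₁ > z₁]·1[x₂ > z₂] · h_{j₁,m₁,ℓ₁}(x₁) dx₁dx₂ = b^{−j₁−1} · [(bm₁+k₁+1−b^{j₁+1}z₁)·exp(2πik₁ℓ₁/b) + ∑_{r₁=k₁+1}^{b−1} exp(2πir₁ℓ₁/b)] · (1 − z₂). -/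

import Mathlib

open Finset MeasureTheory

/-- `bexp b ℓ k = exp(2πiℓk/b)`. -/
noncomputable def bexp (b ℓ k : ℕ) : ℂ :=
  Complex.exp (2 * Real.pi * Complex.I * ℓ * k / b)

/-- The `b`-adic Haar function `h_{j,m,ℓ}` on `[0,1)`. -/
noncomputable def haar (b j m ℓ : ℕ) (x : ℝ) : ℂ :=
  ∑ k ∈ Finset.range b,
    if ((b:ℝ)^(j+1))⁻¹ * ((b:ℝ)*m + k) ≤ x ∧ x < ((b:ℝ)^(j+1))⁻¹ * ((b:ℝ)*m + k + 1)
    then bexp b ℓ k else 0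


lemma prod_eq_indicator (z c d : ℝ) (w : ℂ) :
    (fun x => (if z < x then (1:ℂ) else 0) * (if c ≤ x ∧ x < d then w else 0))
      = (Set.Ioi z ∩ Set.Ico c d).indicator (fun _ => w) := by
  funext x
  by_cases h1 : z < x <;> by_cases h2 : c ≤ x ∧ x < d <;>
    simp [Set.indicator_apply, Set.mem_Ioi, Set.mem_Ico, h1, h2]

lemma step_int (z c d : ℝ) (hc : 0 ≤ c) (hd : d ≤ 1) (w : ℂ) :
    ∫ x in Set.Ico (0:ℝ) 1,
        (if z < x then (1:ℂ) else 0) * (if c ≤ x ∧ x < d then w else 0)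
      = (volume (Set.Ioi z ∩ Set.Ico c d)).toReal • w := by
  rw [prod_eq_indicator z c d w,
    setIntegral_indicator (measurableSet_Ioi.inter measurableSet_Ico), setIntegral_const, measureReal_def]
  congr 2
  refine congrArg volume (Set.inter_eq_right.mpr ?_)
  intro x hx
  exact ⟨hc.trans hx.2.1, lt_of_lt_of_le hx.2.2 hd⟩

lemma step_integrable (z c d : ℝ) (w : ℂ) :
    MeasureTheory.IntegrableOn
      (fun x => (if z < x then (1:ℂ) else 0) * (if c ≤ x ∧ x < d then w else 0))
      (Set.Ico 0 1) := by
  rw [prod_eq_indicator z c d w]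
  exact (integrableOn_const (by simp)).indicator
    (measurableSet_Ioi.inter measurableSet_Ico)

lemma inner_int (z : ℝ) (h0 : 0 ≤ z) (h1 : z < 1) :
    ∫ x in Set.Ico (0:ℝ) 1, (if z < x then (1:ℂ) else 0) = 1 - (z:ℂ) := by
  have h := step_int z 0 1 le_rfl le_rfl 1
  have he : (fun x : ℝ => (if z < x then (1:ℂ) else 0))
      =ᵐ[volume.restrict (Set.Ico (0:ℝ) 1)]
      (fun x => (if z < x then (1:ℂ) else 0) * (if 0 ≤ x ∧ x < 1 then (1:ℂ) else 0)) := by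
    filter_upwards [ae_restrict_mem measurableSet_Ico] with x hx
    simp [hx.1, hx.2]
  rw [integral_congr_ae he, h]
  have hs : Set.Ioi z ∩ Set.Ico (0:ℝ) 1 = Set.Ioo z 1 := by
    ext x
    simp only [Set.mem_inter_iff, Set.mem_Ioi, Set.mem_Ico, Set.mem_Ioo]
    constructor
    · rintro ⟨hz, _, hx1⟩; exact ⟨hz, hx1⟩
    · rintro ⟨hz, hx1⟩; exact ⟨hz, h0.trans hz.le, hx1⟩
  rw [hs, Real.volume_Ioo, ENNReal.toReal_ofReal (by linarith)]
  norm_num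

/-- The Haar coefficient of the indicator of `(z₁,1) × (z₂,1)` for the index
`j = (j₁, −1)`, the second factor being `h_{−1,0,1} = 1_{[0,1)}`. -/
theorem haar_coeff_indicator_mixed (b : ℕ) (hb : 2 ≤ b) (j₁ m₁ ℓ₁ : ℕ)
    (hm₁ : m₁ < b ^ j₁) (hℓ₁ : 1 ≤ ℓ₁) (hℓ₁' : ℓ₁ ≤ b - 1)
    (z₁ z₂ : ℝ) (hz₁' : z₁ ∈ Set.Ico (0:ℝ) 1) (hz₂' : z₂ ∈ Set.Ico (0:ℝ) 1)
    (hz₁ : z₁ ∈ Set.Ioo ((b:ℝ)^(-(j₁:ℤ)) * m₁) ((b:ℝ)^(-(j₁:ℤ)) * (m₁ + 1)))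
    (k₁ : ℕ) (hk₁ : k₁ < b)
    (hzk₁ : ((b:ℝ)^(j₁+1))⁻¹ * ((b:ℝ)*m₁ + k₁) ≤ z₁ ∧
            z₁ < ((b:ℝ)^(j₁+1))⁻¹ * ((b:ℝ)*m₁ + k₁ + 1)) :
    (∫ x₁ in Set.Ico (0:ℝ) 1, ∫ x₂ in Set.Ico (0:ℝ) 1,
        (if z₁ < x₁ then (1:ℂ) else 0) * (if z₂ < x₂ then (1:ℂ) else 0) *
          haar b j₁ m₁ ℓ₁ x₁)
      = (b : ℂ) ^ (-(j₁:ℤ) - 1) *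
        (((b:ℂ)*m₁ + k₁ + 1 - (b:ℂ)^(j₁+1) * (z₁:ℂ)) * bexp b ℓ₁ k₁ +
          ∑ r₁ ∈ Finset.Icc (k₁+1) (b-1), bexp b ℓ₁ r₁) *
        (1 - (z₂:ℂ)) := by
  obtain ⟨hz10, hz11⟩ := hz₁'
  obtain ⟨hz20, hz21⟩ := hz₂'
  have hb0 : (0:ℝ) < b := by exact_mod_cast Nat.lt_of_lt_of_le Nat.zero_lt_two hb
  have hbj : (0:ℝ) < (b:ℝ)^(j₁+1) := pow_pos hb0 _
  -- endpoints bounds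
  have hc : ∀ k : ℕ, (0:ℝ) ≤ ((b:ℝ)^(j₁+1))⁻¹ * ((b:ℝ)*m₁ + k) := by
    intro k; positivity
  have hd : ∀ k : ℕ, k < b → ((b:ℝ)^(j₁+1))⁻¹ * ((b:ℝ)*m₁ + k + 1) ≤ 1 := by
    intro k hk
    rw [inv_mul_le_iff₀ hbj, mul_one]
    have h1 : ((b:ℝ)*m₁ + k + 1) ≤ (b:ℝ) * (m₁ + 1) := by
      have : (k:ℝ) + 1 ≤ (b:ℝ) := by exact_mod_cast Nat.succ_le_of_lt hk
      nlinarith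
    have h2 : (b:ℝ) * (m₁ + 1) ≤ (b:ℝ)^(j₁+1) := by
      have : (m₁:ℝ) + 1 ≤ (b:ℝ)^j₁ := by exact_mod_cast Nat.succ_le_of_lt hm₁
      calc (b:ℝ) * (m₁ + 1) ≤ (b:ℝ) * (b:ℝ)^j₁ := by nlinarith
        _ = (b:ℝ)^(j₁+1) := by ring
    linarith
  -- step 1: inner integral
  have h1 : (∫ x₁ in Set.Ico (0:ℝ) 1, ∫ x₂ in Set.Ico (0:ℝ) 1,
        (if z₁ < x₁ then (1:ℂ) else 0) * (if z₂ < x₂ then (1:ℂ) else 0) *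
          haar b j₁ m₁ ℓ₁ x₁)
      = (∫ x₁ in Set.Ico (0:ℝ) 1,
          (if z₁ < x₁ then (1:ℂ) else 0) * haar b j₁ m₁ ℓ₁ x₁) * (1 - (z₂:ℂ)) := by
    rw [← integral_mul_const]
    refine setIntegral_congr_fun measurableSet_Ico (fun x₁ _ => ?_)
    have hr : (fun x₂ : ℝ => (if z₁ < x₁ then (1:ℂ) else 0) *
          (if z₂ < x₂ then (1:ℂ) else 0) * haar b j₁ m₁ ℓ₁ x₁)
        = fun x₂ => ((if z₁ < x₁ then (1:ℂ) else 0) * haar b j₁ m₁ ℓ₁ x₁) *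
          (if z₂ < x₂ then (1:ℂ) else 0) := by
      funext x₂; ring
    rw [hr, integral_const_mul, inner_int z₂ hz20 hz21]
  rw [h1]
  -- step 2: expand haar and integrate termwise
  have h2 : (∫ x₁ in Set.Ico (0:ℝ) 1,
        (if z₁ < x₁ then (1:ℂ) else 0) * haar b j₁ m₁ ℓ₁ x₁)
      = ∑ k ∈ Finset.range b,
          (volume (Set.Ioi z₁ ∩ Set.Ico (((b:ℝ)^(j₁+1))⁻¹ * ((b:ℝ)*m₁ + k))
            (((b:ℝ)^(j₁+1))⁻¹ * ((b:ℝ)*m₁ + k + 1)))).toReal • bexp b ℓ₁ k := by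
    unfold haar
    simp_rw [Finset.mul_sum]
    rw [integral_finset_sum]
    · exact Finset.sum_congr rfl fun k hk =>
        step_int z₁ _ _ (hc k) (hd k (Finset.mem_range.mp hk)) _
    · exact fun k _ => step_integrable _ _ _ _
  rw [h2]
  -- step 3: compute the measures
  have hvol : ∀ k ∈ Finset.range b,
      (volume (Set.Ioi z₁ ∩ Set.Ico (((b:ℝ)^(j₁+1))⁻¹ * ((b:ℝ)*m₁ + k))
            (((b:ℝ)^(j₁+1))⁻¹ * ((b:ℝ)*m₁ + k + 1)))).toReal • bexp b ℓ₁ k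
      = if k < k₁ then 0
        else if k = k₁ then
          ((((b:ℝ)^(j₁+1))⁻¹ * ((b:ℝ)*m₁ + k₁ + 1) - z₁) : ℝ) • bexp b ℓ₁ k₁
        else (((b:ℝ)^(j₁+1))⁻¹ : ℝ) • bexp b ℓ₁ k := by
    intro k hk
    rcases lt_trichotomy k k₁ with h | h | h
    · rw [if_pos h]
      have hempty : Set.Ioi z₁ ∩ Set.Ico (((b:ℝ)^(j₁+1))⁻¹ * ((b:ℝ)*m₁ + k))
          (((b:ℝ)^(j₁+1))⁻¹ * ((b:ℝ)*m₁ + k + 1)) = ∅ := by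
        rw [Set.eq_empty_iff_forall_notMem]
        rintro x ⟨hx1, hx2, hx3⟩
        have hkk : (k:ℝ) + 1 ≤ (k₁:ℝ) := by exact_mod_cast Nat.succ_le_of_lt h
        have : ((b:ℝ)^(j₁+1))⁻¹ * ((b:ℝ)*m₁ + k + 1)
            ≤ ((b:ℝ)^(j₁+1))⁻¹ * ((b:ℝ)*m₁ + k₁) := by
          apply mul_le_mul_of_nonneg_left (by linarith) (by positivity)
        have := hzk₁.1
        simp only [Set.mem_Ioi] at hx1
        linarith
      rw [hempty]
      simp
    · subst h
      rw [if_neg (lt_irrefl k), if_pos rfl]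
      have hset : Set.Ioi z₁ ∩ Set.Ico (((b:ℝ)^(j₁+1))⁻¹ * ((b:ℝ)*m₁ + k))
          (((b:ℝ)^(j₁+1))⁻¹ * ((b:ℝ)*m₁ + k + 1))
          = Set.Ioo z₁ (((b:ℝ)^(j₁+1))⁻¹ * ((b:ℝ)*m₁ + k + 1)) := by
        ext x
        simp only [Set.mem_inter_iff, Set.mem_Ioi, Set.mem_Ico, Set.mem_Ioo]
        constructor
        · rintro ⟨ha, _, hb2⟩; exact ⟨ha, hb2⟩
        · rintro ⟨ha, hb2⟩; exact ⟨ha, le_trans hzk₁.1 ha.le, hb2⟩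
      rw [hset, Real.volume_Ioo, ENNReal.toReal_ofReal (by linarith [hzk₁.2])]
    · rw [if_neg (not_lt.mpr h.le), if_neg (Nat.ne_of_gt h)]
      have hkk : (k₁:ℝ) + 1 ≤ (k:ℝ) := by exact_mod_cast Nat.succ_le_of_lt h
      have hsub : ((b:ℝ)^(j₁+1))⁻¹ * ((b:ℝ)*m₁ + k₁ + 1)
          ≤ ((b:ℝ)^(j₁+1))⁻¹ * ((b:ℝ)*m₁ + k) := by
        apply mul_le_mul_of_nonneg_left (by linarith) (by positivity)
      have hset : Set.Ioi z₁ ∩ Set.Ico (((b:ℝ)^(j₁+1))⁻¹ * ((b:ℝ)*m₁ + k))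
          (((b:ℝ)^(j₁+1))⁻¹ * ((b:ℝ)*m₁ + k + 1))
          = Set.Ico (((b:ℝ)^(j₁+1))⁻¹ * ((b:ℝ)*m₁ + k))
            (((b:ℝ)^(j₁+1))⁻¹ * ((b:ℝ)*m₁ + k + 1)) := by
        apply Set.inter_eq_right.mpr
        intro x hx
        exact lt_of_lt_of_le (hzk₁.2) (le_trans hsub hx.1)
      rw [hset, Real.volume_Ico]
      congr 1
      rw [show ((b:ℝ)^(j₁+1))⁻¹ * ((b:ℝ)*m₁ + k + 1) - ((b:ℝ)^(j₁+1))⁻¹ * ((b:ℝ)*m₁ + k)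
          = ((b:ℝ)^(j₁+1))⁻¹ by ring, ENNReal.toReal_ofReal (by positivity)]
  rw [Finset.sum_congr rfl hvol]
  -- step 4: split the sum
  have hicc : Finset.Icc (k₁+1) (b-1) = Finset.Ico (k₁+1) b := by
    rw [← Finset.Ico_add_one_right_eq_Icc]
    congr 1
    omega
  rw [hicc, Finset.range_eq_Ico,
    ← Finset.sum_Ico_consecutive _ (Nat.zero_le k₁) (le_of_lt hk₁),
    Finset.sum_eq_sum_Ico_succ_bot hk₁]
  have hzero : ∑ k ∈ Finset.Ico 0 k₁, (if k < k₁ then (0:ℂ)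
        else if k = k₁ then
          ((((b:ℝ)^(j₁+1))⁻¹ * ((b:ℝ)*m₁ + k₁ + 1) - z₁) : ℝ) • bexp b ℓ₁ k₁
        else (((b:ℝ)^(j₁+1))⁻¹ : ℝ) • bexp b ℓ₁ k) = 0 := by
    apply Finset.sum_eq_zero
    intro k hk
    rw [if_pos (Finset.mem_Ico.mp hk).2]
  rw [hzero, zero_add, if_neg (lt_irrefl k₁), if_pos rfl]
  have hrest : ∑ k ∈ Finset.Ico (k₁+1) b, (if k < k₁ then (0:ℂ)
        else if k = k₁ then
          ((((b:ℝ)^(j₁+1))⁻¹ * ((b:ℝ)*m₁ + k₁ + 1) - z₁) : ℝ) • bexp b ℓ₁ k₁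
        else (((b:ℝ)^(j₁+1))⁻¹ : ℝ) • bexp b ℓ₁ k)
      = ∑ k ∈ Finset.Ico (k₁+1) b, (((b:ℝ)^(j₁+1))⁻¹ : ℝ) • bexp b ℓ₁ k := by
    refine Finset.sum_congr rfl fun k hk => ?_
    obtain ⟨hk1, _⟩ := Finset.mem_Ico.mp hk
    rw [if_neg (by omega), if_neg (by omega)]
  rw [hrest]
  -- step 5: final algebra
  have hbC : ((b:ℂ))^(j₁+1) ≠ 0 := by
    apply pow_ne_zero
    exact_mod_cast ne_of_gt hb0
  have hzpow : (b : ℂ) ^ (-(j₁:ℤ) - 1) = (((b:ℂ))^(j₁+1))⁻¹ := by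
    rw [show (-(j₁:ℤ) - 1) = -((j₁:ℤ)+1) by ring, zpow_neg]
    norm_cast
  rw [hzpow]
  simp only [Complex.real_smul]
  push_cast
  have hkey : (((b:ℂ)^(j₁+1))⁻¹ * ((b:ℂ)*(m₁:ℂ)+(k₁:ℂ)+1) - (z₁:ℂ)) * bexp b ℓ₁ k₁
      = ((b:ℂ)^(j₁+1))⁻¹ * (((b:ℂ)*(m₁:ℂ)+(k₁:ℂ)+1 - (b:ℂ)^(j₁+1)*(z₁:ℂ)) * bexp b ℓ₁ k₁) := by
    field_simp
  rw [hkey, mul_add, Finset.mul_sum]
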